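/- Let w̄(t,x₁) be the solution of the Burgers equation constructed from initial data w̄_0(x₁) = (w_++w_-)/2 + ((w_+-w_-)/2) k_0 arctan(x₁) · (2/π)-normalized, with w_- < w_+, via characteristics x₁ = x_0 + w̄_0(x_0) t. Then for every q ∈ [1,∞] there is C_q > 0 such that ‖∂_{x₁} w̄(t,·)‖_{L^q(ℝ)} ≤ C_q min{ w_+ - w_-, (w_+-w_-)^{1/q} (1+t)^{-1+1/q} } for all t ≥ 0. -/

import Mathlib

open MeasureTheory ENNReal

/-- Smoothed Riemann data `w̄₀(x) = (w₊+w₋)/2 + ((w₊-w₋)/2)·(2/π)·arctan x`. -/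
noncomputable def smoothedData13 (wm wp : ℝ) (x : ℝ) : ℝ :=
  (wp + wm) / 2 + (wp - wm) / 2 * (2 / Real.pi) * Real.arctan x

lemma sd_hasDeriv (wm wp y : ℝ) :
    HasDerivAt (smoothedData13 wm wp) ((wp - wm) / Real.pi * (1 + y ^ 2)⁻¹) y := by
  have h1 : HasDerivAt Real.arctan (1 / (1 + y ^ 2)) y := Real.hasDerivAt_arctan y
  have h2 := (h1.const_mul ((wp - wm) / 2 * (2 / Real.pi))).const_add ((wp + wm) / 2)
  refine h2.congr_deriv ?_
  have hpi := Real.pi_ne_zero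
  field_simp

lemma sd_bound (wm wp y : ℝ) :
    |smoothedData13 wm wp y| ≤ |(wp + wm) / 2| + |wp - wm| / 2 := by
  have h1 : |Real.arctan y| ≤ Real.pi / 2 := by
    rw [abs_le]
    exact ⟨le_of_lt (Real.neg_pi_div_two_lt_arctan y), le_of_lt (Real.arctan_lt_pi_div_two y)⟩
  have hpi : (0:ℝ) < Real.pi := Real.pi_pos
  calc |smoothedData13 wm wp y|
      ≤ |(wp + wm) / 2| + |(wp - wm) / 2 * (2 / Real.pi) * Real.arctan y| := abs_add_le _ _
    _ ≤ |(wp + wm) / 2| + |wp - wm| / 2 := by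
        gcongr
        rw [abs_mul, abs_mul, abs_div, abs_div, abs_of_nonneg (le_of_lt hpi), abs_two]
        calc |wp - wm| / 2 * (2 / Real.pi) * |Real.arctan y|
            ≤ |wp - wm| / 2 * (2 / Real.pi) * (Real.pi / 2) := by gcongr
          _ = |wp - wm| / 2 := by field_simp

lemma setup (wm wp : ℝ) (h : wm < wp) (X : ℝ → ℝ → ℝ)
    (hchar : ∀ t x : ℝ, 0 ≤ t → x = X t x + smoothedData13 wm wp (X t x) * t)
    (t : ℝ) (ht : 0 ≤ t) :
    (∀ x : ℝ, HasDerivAt (fun y => smoothedData13 wm wp (X t y))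
        ((wp - wm) / Real.pi * (1 + (X t x) ^ 2 + (wp - wm) / Real.pi * t)⁻¹) x) ∧
    (∀ y : ℝ, X t (y + smoothedData13 wm wp y * t) = y) ∧
    (∀ y : ℝ, HasDerivAt (fun z => z + smoothedData13 wm wp z * t)
        (1 + (wp - wm) / Real.pi * t * (1 + y ^ 2)⁻¹) y) ∧
    StrictMono (fun z => z + smoothedData13 wm wp z * t) ∧
    Function.Surjective (fun z => z + smoothedData13 wm wp z * t) := by
  set a : ℝ := (wp - wm) / Real.pi with ha_def
  have hpi : (0:ℝ) < Real.pi := Real.pi_pos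
  have ha : 0 < a := div_pos (by linarith) hpi
  set G : ℝ → ℝ := fun y => y + smoothedData13 wm wp y * t with hG_def
  set D : ℝ → ℝ := fun y => 1 + a * t * (1 + y ^ 2)⁻¹ with hD_def
  have hr : ∀ y : ℝ, (0:ℝ) < 1 + y ^ 2 := fun y => by positivity
  have hDpos : ∀ y : ℝ, 0 < D y := fun y => by
    have := hr y
    have : (0:ℝ) ≤ a * t * (1 + y ^ 2)⁻¹ := by positivity
    simp only [hD_def]; linarith
  have hG : ∀ y : ℝ, HasDerivAt G (D y) y := by
    intro y
    have := (hasDerivAt_id y).add ((sd_hasDeriv wm wp y).mul_const t)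
    refine this.congr_deriv ?_
    simp only [hD_def, ha_def]; ring
  have hXG : ∀ x : ℝ, G (X t x) = x := fun x => (hchar t x ht).symm
  have hGmono : StrictMono G := by
    apply strictMono_of_deriv_pos
    intro y
    rw [(hG y).deriv]
    exact hDpos y
  have hGcont : Continuous G := by
    rw [continuous_iff_continuousAt]
    exact fun y => (hG y).continuousAt
  -- surjectivity
  set B : ℝ := |(wp + wm) / 2| + |wp - wm| / 2 with hB_def
  have hGsurj : Function.Surjective G := by
    apply hGcont.surjective
    · apply Filter.tendsto_atTop_mono (f := fun y : ℝ => y + (-(B * t)))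
      · intro y
        have h1 := mul_le_mul_of_nonneg_right (abs_le.mp (sd_bound wm wp y)).1 ht
        simp only [hG_def, ← hB_def] at h1 ⊢
        rw [neg_mul] at h1
        linarith
      · exact Filter.tendsto_atTop_add_const_right _ _ Filter.tendsto_id
    · apply Filter.tendsto_atBot_mono (f := fun y : ℝ => y + B * t)
      · intro y
        have h1 := mul_le_mul_of_nonneg_right (abs_le.mp (sd_bound wm wp y)).2 ht
        simp only [hG_def, ← hB_def] at h1 ⊢
        linarith
      · exact Filter.tendsto_atBot_add_const_right _ _ Filter.tendsto_id
  have hXGy : ∀ y : ℝ, X t (G y) = y := fun y => hGmono.injective (hXG (G y))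
  -- continuity of X t
  have hXcont : Continuous (X t) := by
    have he : X t = ⇑(StrictMono.orderIsoOfSurjective G hGmono hGsurj).symm := by
      funext x
      apply hGmono.injective
      rw [hXG]
      exact (StrictMono.orderIsoOfSurjective_self_symm_apply G hGmono hGsurj x).symm
    rw [he]
    exact OrderIso.continuous _
  have hX' : ∀ x : ℝ, HasDerivAt (X t) ((D (X t x))⁻¹) x := fun x =>
    HasDerivAt.of_local_left_inverse hXcont.continuousAt (hG (X t x))
      (ne_of_gt (hDpos _)) (Filter.Eventually.of_forall hXG)
  have key : ∀ b r s : ℝ, 0 < r → 0 ≤ s → b * (r + s)⁻¹ = b * r⁻¹ * (1 + s * r⁻¹)⁻¹ := by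
    intro b r s hr0 hs0
    have hrs : (0:ℝ) < r + s := by linarith
    rw [eq_comm]
    field_simp
  refine ⟨fun x => ?_, hXGy, hG, hGmono, hGsurj⟩
  have hc := HasDerivAt.comp x (sd_hasDeriv wm wp (X t x)) (hX' x)
  refine hc.congr_deriv (Eq.symm ?_)
  simp only [hD_def]
  exact key ((wp - wm) / Real.pi) (1 + (X t x) ^ 2) (a * t) (hr _) (by positivity)

lemma key_ineq (a t : ℝ) (ha : 0 < a) (ht : 0 ≤ t) :
    a * (1 + t) ≤ max 1 a * (1 + a * t) := by
  rcases le_total a 1 with h1 | h1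
  · rw [max_eq_left h1]
    nlinarith
  · rw [max_eq_right h1]
    nlinarith [mul_nonneg (mul_nonneg ha.le ht) (sub_nonneg.mpr h1)]

lemma aux_fin (a t q : ℝ) (ha : 0 < a) (ht : 0 ≤ t) (hq : 1 ≤ q) :
    (Real.pi * (a ^ q * ((1 + a * t) ^ (q - 1))⁻¹)) ^ q⁻¹
      ≤ max 1 a * min (Real.pi * a) ((Real.pi * a) ^ q⁻¹ * (1 + t) ^ (-1 + q⁻¹)) := by
  have hq0 : (0:ℝ) < q := by linarith
  have hpi : (0:ℝ) < Real.pi := Real.pi_pos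
  have hpi1 : (1:ℝ) ≤ Real.pi := by linarith [Real.pi_gt_three]
  set u : ℝ := 1 + a * t with hu_def
  set v : ℝ := 1 + t with hv_def
  have hu : (1:ℝ) ≤ u := by have : 0 ≤ a * t := by positivity
                            simp [hu_def]; linarith
  have hv : (1:ℝ) ≤ v := by simp [hv_def]; linarith
  have hu0 : (0:ℝ) < u := by linarith
  have hv0 : (0:ℝ) < v := by linarith
  set s : ℝ := 1 - q⁻¹ with hs_def
  have hqi0 : 0 < q⁻¹ := by positivity
  have hqi1 : q⁻¹ ≤ 1 := by
    rw [inv_le_one_iff₀]; right; exact hq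
  have hs0 : 0 ≤ s := by simp [hs_def]; linarith
  have hs1 : s ≤ 1 := by simp [hs_def]; linarith
  set M : ℝ := max 1 a with hM_def
  have hM1 : (1:ℝ) ≤ M := le_max_left _ _
  have hM0 : (0:ℝ) < M := by linarith
  -- Step A : LHS = π^(q⁻¹) * a * (u^s)⁻¹
  have hA : (Real.pi * (a ^ q * (u ^ (q - 1))⁻¹)) ^ q⁻¹
      = Real.pi ^ q⁻¹ * (a * (u ^ s)⁻¹) := by
    have e1 : q * q⁻¹ = 1 := mul_inv_cancel₀ (ne_of_gt hq0)
    have e2 : (q - 1) * q⁻¹ = s := by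
      rw [hs_def]; field_simp
    rw [Real.mul_rpow hpi.le (by positivity), Real.mul_rpow (by positivity) (by positivity),
      Real.inv_rpow (by positivity), ← Real.rpow_mul ha.le, ← Real.rpow_mul hu0.le,
      e1, e2, Real.rpow_one]
  rw [hA]
  have husp : (0:ℝ) < u ^ s := Real.rpow_pos_of_pos hu0 s
  have hvsp : (0:ℝ) < v ^ s := Real.rpow_pos_of_pos hv0 s
  -- first bound
  have hb1 : Real.pi ^ q⁻¹ * (a * (u ^ s)⁻¹) ≤ M * (Real.pi * a) := by
    have h1 : Real.pi ^ q⁻¹ ≤ Real.pi := by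
      calc Real.pi ^ q⁻¹ ≤ Real.pi ^ (1:ℝ) :=
            Real.rpow_le_rpow_of_exponent_le hpi1 hqi1
        _ = Real.pi := Real.rpow_one _
    have h2 : a * (u ^ s)⁻¹ ≤ a := by
      have h3 : (u ^ s)⁻¹ ≤ 1 := by
        rw [inv_le_one_iff₀]; right; exact Real.one_le_rpow hu hs0
      calc a * (u ^ s)⁻¹ ≤ a * 1 := by gcongr
        _ = a := mul_one a
    calc Real.pi ^ q⁻¹ * (a * (u ^ s)⁻¹) ≤ Real.pi * a := by
          apply mul_le_mul h1 h2 (by positivity) hpi.le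
      _ ≤ M * (Real.pi * a) := le_mul_of_one_le_left (by positivity) hM1
  -- second bound
  have hb2 : Real.pi ^ q⁻¹ * (a * (u ^ s)⁻¹)
      ≤ M * ((Real.pi * a) ^ q⁻¹ * v ^ (-1 + q⁻¹)) := by
    have hexp : (-1 : ℝ) + q⁻¹ = -s := by rw [hs_def]; ring
    rw [hexp, Real.rpow_neg hv0.le, Real.mul_rpow hpi.le ha.le]
    -- reduce to : a / u^s ≤ M * a^q⁻¹ / v^s
    have hcl : a / u ^ s ≤ M * a ^ q⁻¹ / v ^ s := by
      rw [div_le_div_iff₀ husp hvsp]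
      have e3 : a * v ^ s = a ^ q⁻¹ * (a ^ s * v ^ s) := by
        rw [← mul_assoc, ← Real.rpow_add ha, hs_def]
        norm_num
      rw [e3, ← Real.mul_rpow ha.le hv0.le]
      have h4 : (a * v) ^ s ≤ (M * u) ^ s :=
        Real.rpow_le_rpow (by positivity) (key_ineq a t ha ht) hs0
      have h5 : (M * u) ^ s = M ^ s * u ^ s := Real.mul_rpow (by positivity) hu0.le
      have h6 : M ^ s ≤ M := by
        calc M ^ s ≤ M ^ (1:ℝ) := Real.rpow_le_rpow_of_exponent_le hM1 hs1
          _ = M := Real.rpow_one _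
      calc a ^ q⁻¹ * ((a * v) ^ s) ≤ a ^ q⁻¹ * (M ^ s * u ^ s) := by
            rw [← h5]; gcongr
        _ ≤ a ^ q⁻¹ * (M * u ^ s) := by gcongr
        _ = M * a ^ q⁻¹ * u ^ s := by ring
    calc Real.pi ^ q⁻¹ * (a * (u ^ s)⁻¹) = Real.pi ^ q⁻¹ * (a / u ^ s) := by
          rw [div_eq_mul_inv]
      _ ≤ Real.pi ^ q⁻¹ * (M * a ^ q⁻¹ / v ^ s) := by gcongr
      _ = M * (Real.pi ^ q⁻¹ * a ^ q⁻¹ * (v ^ s)⁻¹) := by ring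
  rw [mul_min_of_nonneg _ _ hM0.le]
  exact le_min hb1 hb2

lemma pointwise_bound (a t q y : ℝ) (ha : 0 < a) (ht : 0 ≤ t) (hq : 1 ≤ q) :
    (1 + a * t * (1 + y ^ 2)⁻¹) * (a * (1 + y ^ 2 + a * t)⁻¹) ^ q
      ≤ a ^ q * ((1 + a * t) ^ (q - 1))⁻¹ * (1 + y ^ 2)⁻¹ := by
  have hr : (0:ℝ) < 1 + y ^ 2 := by positivity
  have hat : (0:ℝ) ≤ a * t := by positivity
  have hw : (0:ℝ) < 1 + y ^ 2 + a * t := by linarith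
  have hu0 : (0:ℝ) < 1 + a * t := by linarith
  have huw : 1 + a * t ≤ 1 + y ^ 2 + a * t := by nlinarith [sq_nonneg y]
  have e : (1 + a * t * (1 + y ^ 2)⁻¹) * (a * (1 + y ^ 2 + a * t)⁻¹) ^ q
      = a ^ q * ((1 + y ^ 2 + a * t) ^ (q - 1))⁻¹ * (1 + y ^ 2)⁻¹ := by
    rw [Real.mul_rpow ha.le (by positivity), Real.inv_rpow hw.le]
    have hsplit : (1 + y ^ 2 + a * t) ^ q
        = (1 + y ^ 2 + a * t) ^ (q - 1) * (1 + y ^ 2 + a * t) := by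
      have h2 := Real.rpow_add hw (q - 1) 1
      rw [sub_add_cancel] at h2
      rw [h2, Real.rpow_one]
    rw [hsplit]
    have h1 : ((1 + y ^ 2 + a * t) ^ (q - 1)) ≠ 0 :=
      ne_of_gt (Real.rpow_pos_of_pos hw _)
    field_simp
  rw [e]
  have hmono : ((1 + y ^ 2 + a * t) ^ (q - 1))⁻¹ ≤ ((1 + a * t) ^ (q - 1))⁻¹ := by
    have h5 : (0:ℝ) < (1 + a * t) ^ (q - 1) := Real.rpow_pos_of_pos hu0 _
    have h6 : (1 + a * t) ^ (q - 1) ≤ (1 + y ^ 2 + a * t) ^ (q - 1) :=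
      Real.rpow_le_rpow hu0.le huw (by linarith)
    exact inv_anti₀ h5 h6
  exact mul_le_mul_of_nonneg_right
    (mul_le_mul_of_nonneg_left hmono (by positivity : (0:ℝ) ≤ a ^ q))
    (by positivity : (0:ℝ) ≤ (1 + y ^ 2)⁻¹)

theorem stmt_13 (wm wp : ℝ) (h : wm < wp) (X : ℝ → ℝ → ℝ)
    (hchar : ∀ t x : ℝ, 0 ≤ t → x = X t x + smoothedData13 wm wp (X t x) * t) :
    ∀ p : ℝ≥0∞, 1 ≤ p →
      ∃ C : ℝ, 0 < C ∧
        ∀ t : ℝ, 0 ≤ t →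
          (eLpNorm (fun x => deriv (fun y => smoothedData13 wm wp (X t y)) x)
              p volume).toReal
            ≤ C * min (wp - wm)
                ((wp - wm) ^ (p.toReal⁻¹) * (1 + t) ^ (-1 + p.toReal⁻¹)) := by
  intro p hp
  have hpi : (0:ℝ) < Real.pi := Real.pi_pos
  have hpi1 : (1:ℝ) ≤ Real.pi := by linarith [Real.pi_gt_three]
  set a : ℝ := (wp - wm) / Real.pi with ha_def
  have ha : 0 < a := div_pos (by linarith) hpi
  have hπa : Real.pi * a = wp - wm := by rw [ha_def]; field_simp
  set M : ℝ := max 1 a with hM_def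
  have hM1 : (1:ℝ) ≤ M := le_max_left _ _
  have hM0 : (0:ℝ) < M := by linarith
  refine ⟨M, hM0, ?_⟩
  intro t ht
  obtain ⟨hW, hXGy, hG, hGmono, hGsurj⟩ := setup wm wp h X hchar t ht
  simp only [← ha_def] at hW hG
  have hat : (0:ℝ) ≤ a * t := by positivity
  have hu0 : (0:ℝ) < 1 + a * t := by linarith
  have hwpos : ∀ y : ℝ, (0:ℝ) < 1 + y ^ 2 + a * t := fun y => by nlinarith [sq_nonneg y]
  have hFpos : ∀ y : ℝ, 0 < a * (1 + y ^ 2 + a * t)⁻¹ := fun y => by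
    have := hwpos y; positivity
  have hderiv : (fun x => deriv (fun y => smoothedData13 wm wp (X t y)) x)
      = fun x => a * (1 + (X t x) ^ 2 + a * t)⁻¹ := funext fun x => (hW x).deriv
  rw [hderiv]
  by_cases hptop : p = ⊤
  · subst hptop
    simp only [eLpNorm_exponent_top, ENNReal.toReal_top, _root_.inv_zero, Real.rpow_zero, one_mul,
      add_zero]
    have hbd : ∀ x : ℝ, ‖a * (1 + (X t x) ^ 2 + a * t)⁻¹‖ ≤ a * (1 + a * t)⁻¹ := fun x => by
      rw [Real.norm_of_nonneg (hFpos (X t x)).le]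
      apply mul_le_mul_of_nonneg_left _ ha.le
      apply inv_anti₀ hu0
      nlinarith [sq_nonneg (X t x)]
    refine le_trans (ENNReal.toReal_le_of_le_ofReal (by positivity)
      (eLpNormEssSup_le_of_ae_bound (Filter.Eventually.of_forall hbd))) ?_
    norm_num
    rw [← hπa, Real.rpow_neg_one, mul_min_of_nonneg _ _ hM0.le]
    refine le_min ?_ ?_
    · calc a * (1 + a * t)⁻¹ ≤ a * 1 := by
            apply mul_le_mul_of_nonneg_left _ ha.le
            rw [inv_le_one_iff₀]; right; linarith
        _ = a := mul_one a
        _ ≤ M * (Real.pi * a) := by nlinarith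
    · rw [← div_eq_mul_inv, ← div_eq_mul_inv,
        div_le_div_iff₀ hu0 (by linarith : (0:ℝ) < 1 + t)]
      have := key_ineq a t ha ht
      nlinarith
  · -- finite exponent
    have hp0 : p ≠ 0 := by
      intro h0; rw [h0] at hp; exact absurd hp (by simp)
    set q : ℝ := p.toReal with hq_def
    have hq : 1 ≤ q := by
      rw [hq_def, ← ENNReal.toReal_one]
      exact ENNReal.toReal_mono hptop hp
    have hq0 : (0:ℝ) < q := by linarith
    set K : ℝ := a ^ q * ((1 + a * t) ^ (q - 1))⁻¹ with hK_def
    have hK0 : 0 < K := by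
      have := Real.rpow_pos_of_pos hu0 (q - 1)
      have := Real.rpow_pos_of_pos ha q
      positivity
    rw [eLpNorm_eq_lintegral_rpow_enorm_toReal hp0 hptop]
    set G : ℝ → ℝ := fun z => z + smoothedData13 wm wp z * t with hG_def
    have hXGy' : ∀ y : ℝ, X t (G y) = y := hXGy
    have cov := lintegral_image_eq_lintegral_abs_det_fderiv_mul volume MeasurableSet.univ
      (fun y (_ : y ∈ Set.univ) => ((hG y).hasFDerivAt).hasFDerivWithinAt)
      (hGmono.injective.injOn)
      (fun x => ENNReal.ofReal (a * (1 + (X t x) ^ 2 + a * t)⁻¹) ^ q)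
    rw [Set.image_univ, hGsurj.range_eq] at cov
    simp only [Measure.restrict_univ, ContinuousLinearMap.det_toSpanSingleton, hXGy'] at cov
    have henn : (∫⁻ x, (‖a * (1 + (X t x) ^ 2 + a * t)⁻¹‖₊ : ℝ≥0∞) ^ q ∂volume)
        = ∫⁻ x, ENNReal.ofReal (a * (1 + (X t x) ^ 2 + a * t)⁻¹) ^ q ∂volume := by
      congr 1
      funext x
      rw [← enorm_eq_nnnorm, ← ofReal_norm, Real.norm_of_nonneg (hFpos (X t x)).le]
    have hle : (∫⁻ y, ENNReal.ofReal |1 + a * t * (1 + y ^ 2)⁻¹|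
          * ENNReal.ofReal (a * (1 + y ^ 2 + a * t)⁻¹) ^ q ∂volume)
        ≤ ENNReal.ofReal (K * Real.pi) := by
      have step1 : (∫⁻ y, ENNReal.ofReal |1 + a * t * (1 + y ^ 2)⁻¹|
            * ENNReal.ofReal (a * (1 + y ^ 2 + a * t)⁻¹) ^ q ∂volume)
          ≤ ∫⁻ y, ENNReal.ofReal K * ENNReal.ofReal ((1 + y ^ 2)⁻¹) ∂volume := by
        apply lintegral_mono
        intro y
        dsimp only
        have hr : (0:ℝ) < 1 + y ^ 2 := by positivity
        have hD0 : (0:ℝ) ≤ 1 + a * t * (1 + y ^ 2)⁻¹ := by positivity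
        rw [abs_of_nonneg hD0,
          ENNReal.ofReal_rpow_of_nonneg (hFpos y).le hq0.le,
          ← ENNReal.ofReal_mul hD0, ← ENNReal.ofReal_mul hK0.le]
        exact ENNReal.ofReal_le_ofReal (pointwise_bound a t q y ha ht hq)
      refine le_trans step1 (le_of_eq ?_)
      rw [lintegral_const_mul' _ _ ENNReal.ofReal_ne_top,
        ← ofReal_integral_eq_lintegral_ofReal integrable_inv_one_add_sq
          (Filter.Eventually.of_forall fun y => by positivity),
        integral_univ_inv_one_add_sq, ← ENNReal.ofReal_mul hK0.le]
    have hbig : (∫⁻ x, (‖a * (1 + (X t x) ^ 2 + a * t)⁻¹‖₊ : ℝ≥0∞) ^ q ∂volume) ^ (1 / q)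
        ≤ ENNReal.ofReal ((K * Real.pi) ^ (1 / q)) := by
      rw [henn, cov, ← ENNReal.ofReal_rpow_of_nonneg (by positivity) (by positivity)]
      exact ENNReal.rpow_le_rpow hle (by positivity)
    refine le_trans (ENNReal.toReal_le_of_le_ofReal (by positivity) hbig) ?_
    rw [← hπa]
    have := aux_fin a t q ha ht hq
    rw [one_div, mul_comm K Real.pi]
    exact this
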